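/- Let H₁ and H₂ be finite simple graphs. Then the signature number of their direct product satisfies s(H₁ × H₂) = s(H₁) · s(H₂). -/

import Mathlib

/-- The signature set `S(T)` of a set `T` of vertices of `H`: the set of common
neighbors of all vertices of `T`. -/
def sigSet {V : Type} (H : SimpleGraph V) (T : Set V) : Set V :=
  ⋂ t ∈ T, H.neighborSet t

/-- The family `𝒮(H)` of all nonempty signature sets of nonempty vertex sets. -/
def sigFamily {V : Type} (H : SimpleGraph V) : Set (Set V) :=
  {S | S.Nonempty ∧ ∃ T : Set V, T.Nonempty ∧ sigSet H T = S}

/-- The signature number `s(H)`, i.e. the cardinality of `𝒮(H)`. -/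
noncomputable def sigNum {V : Type} (H : SimpleGraph V) : ℕ := (sigFamily H).ncard

/-- The direct (tensor) product of two simple graphs. -/
def tensorProd {V₁ V₂ : Type} (H₁ : SimpleGraph V₁) (H₂ : SimpleGraph V₂) :
    SimpleGraph (V₁ × V₂) where
  Adj x y := H₁.Adj x.1 y.1 ∧ H₂.Adj x.2 y.2
  symm := ⟨fun _ _ h => ⟨h.1.symm, h.2.symm⟩⟩
  loopless := ⟨fun _ h => h.1.ne rfl⟩

lemma mem_sigSet {V : Type} (H : SimpleGraph V) (T : Set V) (x : V) :
    x ∈ sigSet H T ↔ ∀ t ∈ T, H.Adj t x := by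
  simp [sigSet]

lemma sigSet_tensor {V₁ V₂ : Type} (H₁ : SimpleGraph V₁) (H₂ : SimpleGraph V₂)
    (T : Set (V₁ × V₂)) :
    sigSet (tensorProd H₁ H₂) T
      = (sigSet H₁ (Prod.fst '' T)) ×ˢ (sigSet H₂ (Prod.snd '' T)) := by
  ext ⟨x, y⟩
  simp only [Set.mem_prod, mem_sigSet]
  constructor
  · intro h
    constructor
    · rintro a ⟨⟨a', b'⟩, ht, rfl⟩
      exact (h _ ht).1
    · rintro b ⟨⟨a', b'⟩, ht, rfl⟩
      exact (h _ ht).2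
  · rintro ⟨h1, h2⟩ ⟨a, b⟩ ht
    exact ⟨h1 a ⟨(a, b), ht, rfl⟩, h2 b ⟨(a, b), ht, rfl⟩⟩

lemma sigFamily_tensor {V₁ V₂ : Type} (H₁ : SimpleGraph V₁) (H₂ : SimpleGraph V₂) :
    sigFamily (tensorProd H₁ H₂)
      = (fun p : Set V₁ × Set V₂ => p.1 ×ˢ p.2) '' (sigFamily H₁ ×ˢ sigFamily H₂) := by
  ext S
  constructor
  · rintro ⟨hSne, T, hTne, rfl⟩
    refine ⟨(sigSet H₁ (Prod.fst '' T), sigSet H₂ (Prod.snd '' T)), ⟨⟨?_, _, hTne.image _, rfl⟩,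
      ⟨?_, _, hTne.image _, rfl⟩⟩, (sigSet_tensor H₁ H₂ T).symm⟩
    · obtain ⟨⟨x, y⟩, hxy⟩ := hSne
      rw [sigSet_tensor] at hxy
      exact ⟨x, hxy.1⟩
    · obtain ⟨⟨x, y⟩, hxy⟩ := hSne
      rw [sigSet_tensor] at hxy
      exact ⟨y, hxy.2⟩
  · rintro ⟨⟨S₁, S₂⟩, ⟨⟨h1ne, T₁, hT₁, rfl⟩, ⟨h2ne, T₂, hT₂, rfl⟩⟩, rfl⟩
    refine ⟨h1ne.prod h2ne, T₁ ×ˢ T₂, hT₁.prod hT₂, ?_⟩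
    rw [sigSet_tensor, Set.fst_image_prod _ hT₂, Set.snd_image_prod hT₁ _]

/-- `s(H₁ × H₂) = s(H₁) · s(H₂)` for finite simple graphs. -/
theorem stmt_18 {V₁ V₂ : Type} [Fintype V₁] [Fintype V₂]
    (H₁ : SimpleGraph V₁) (H₂ : SimpleGraph V₂) :
    sigNum (tensorProd H₁ H₂) = sigNum H₁ * sigNum H₂ := by
  unfold sigNum
  rw [sigFamily_tensor]
  rw [Set.ncard_image_of_injOn]
  · rw [← Nat.card_coe_set_eq, ← Nat.card_coe_set_eq, ← Nat.card_coe_set_eq,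
      Nat.card_congr (Equiv.Set.prod _ _), Nat.card_prod]
  · rintro ⟨S₁, S₂⟩ ⟨hS₁, hS₂⟩ ⟨S₁', S₂'⟩ ⟨hS₁', hS₂'⟩ h
    simp only at h
    obtain ⟨e1, e2⟩ := Set.prod_eq_prod_iff_of_nonempty (hS₁.1.prod hS₂.1) |>.mp h
    exact Prod.ext e1 e2
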